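/- Let H⁰ be symmetric positive definite with eigenvalues in [μ₁, μ₂], let s, ŷ ∈ ℝⁿ satisfy sᵀŷ ≥ (η/μ₂)‖s‖² and ‖ŷ‖ ≤ L₁‖s‖ where L₁ = L_g + 1/μ₁, and let H = V̂ H⁰ V̂ᵀ + ρ̂ s sᵀ with ρ̂ = 1/(sᵀŷ) and V̂ = I − ρ̂ s ŷᵀ. Then λ_min(H) ≥ min(1/L₁, μ₁/(1 + (μ₁μ₂/η)L₁²)) > 0 and λ_max(H) ≤ μ₂/η + max(0, (μ₂³/η²)L₁² − μ₂/(1 + (μ₂²/η)L₁²)). -/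

import Mathlib

set_option maxHeartbeats 1000000

open Matrix
open scoped Matrix

lemma dotCS {n : ℕ} (v w : Fin n → ℝ) : (v ⬝ᵥ w)^2 ≤ (v ⬝ᵥ v) * (w ⬝ᵥ w) := by
  simpa [dotProduct, sq] using Finset.sum_mul_sq_le_sq_mul_sq Finset.univ v w

lemma dot_self_nonneg {n : ℕ} (v : Fin n → ℝ) : 0 ≤ v ⬝ᵥ v :=
  Finset.sum_nonneg fun i _ => mul_self_nonneg _

lemma dot_self_pos {n : ℕ} (v : Fin n → ℝ) (hv : v ≠ 0) : 0 < v ⬝ᵥ v := by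
  rcases (dot_self_nonneg v).lt_or_eq with h | h
  · exact h
  · exact absurd ((dotProduct_self_eq_zero).mp h.symm) hv

lemma quadform_bounds {n : ℕ} {A : Matrix (Fin n) (Fin n) ℝ} (hA : A.IsHermitian)
    (a b : ℝ) (h : ∀ i, a ≤ hA.eigenvalues i ∧ hA.eigenvalues i ≤ b) (v : Fin n → ℝ) :
    a * (v ⬝ᵥ v) ≤ v ⬝ᵥ (A *ᵥ v) ∧ v ⬝ᵥ (A *ᵥ v) ≤ b * (v ⬝ᵥ v) := by
  classical
  set U : Matrix (Fin n) (Fin n) ℝ := (hA.eigenvectorUnitary : Matrix (Fin n) (Fin n) ℝ) with hU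
  have hUU : U * star U = 1 := (Matrix.mem_unitaryGroup_iff).mp hA.eigenvectorUnitary.2
  set w : Fin n → ℝ := (star U) *ᵥ v with hw
  have hstar : star U = Uᵀ := by ext i j; simp [Matrix.star_apply]
  have hvw : v ᵥ* U = w := by rw [hw, hstar, mulVec_transpose]
  have hUw : U *ᵥ w = v := by rw [hw, mulVec_mulVec, hUU, one_mulVec]
  have h2 : v ⬝ᵥ v = ∑ i, (w i)^2 := by
    nth_rewrite 2 [← hUw]
    rw [dotProduct_mulVec, hvw]
    simp [dotProduct, sq]
  have h1 : v ⬝ᵥ (A *ᵥ v) = ∑ i, hA.eigenvalues i * (w i)^2 := by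
    have hAv : A *ᵥ v = U *ᵥ ((diagonal (RCLike.ofReal ∘ hA.eigenvalues)) *ᵥ w) := by
      rw [hw, mulVec_mulVec, mulVec_mulVec]; exact congrArg (· *ᵥ v) hA.spectral_theorem
    rw [hAv, dotProduct_mulVec, hvw, dotProduct]
    apply Finset.sum_congr rfl
    intro i _
    simp [mulVec_diagonal]
    ring
  constructor
  · rw [h1, h2, Finset.mul_sum]
    exact Finset.sum_le_sum fun i _ => mul_le_mul_of_nonneg_right (h i).1 (sq_nonneg _)
  · rw [h1, h2, Finset.mul_sum]
    exact Finset.sum_le_sum fun i _ => mul_le_mul_of_nonneg_right (h i).2 (sq_nonneg _)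

lemma eig_rayleigh {n : ℕ} {H : Matrix (Fin n) (Fin n) ℝ} (hH : H.IsHermitian) (i : Fin n) :
    ∃ x : Fin n → ℝ, x ⬝ᵥ x = 1 ∧ x ⬝ᵥ (H *ᵥ x) = hH.eigenvalues i := by
  have hxx : ⇑(hH.eigenvectorBasis i) ⬝ᵥ ⇑(hH.eigenvectorBasis i) = 1 := by
    have hn : ‖hH.eigenvectorBasis i‖ = 1 := hH.eigenvectorBasis.orthonormal.1 i
    have h0 : Real.sqrt (∑ j, ‖hH.eigenvectorBasis i j‖^2) = 1 := by
      rw [← EuclideanSpace.norm_eq]; exact hn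
    have h2 := congrArg (·^2) h0
    simp only [Real.sq_sqrt (Finset.sum_nonneg fun j _ => sq_nonneg _)] at h2
    simpa [dotProduct, sq] using h2
  refine ⟨⇑(hH.eigenvectorBasis i), hxx, ?_⟩
  rw [hH.mulVec_eigenvectorBasis, dotProduct_smul, hxx, smul_eq_mul, mul_one]

lemma lower_scalar (μ₁ μ₂ η L₁ ρ Y t p : ℝ) (hμ1 : 0 < μ₁) (hμ2 : 0 < μ₂) (hη : 0 < η)
    (hL : 0 < L₁) (hρ : 0 < ρ) (hY0 : 0 ≤ Y) (hp : p ^ 2 ≤ Y) (hρY : ρ * Y ≤ μ₂ / η * L₁ ^ 2) :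
    μ₁ / (1 + (μ₁ * μ₂ / η) * L₁ ^ 2) ≤ μ₁ * (1 - 2 * ρ * t * p + ρ ^ 2 * t ^ 2 * Y) + ρ * t ^ 2 := by
  set q := Real.sqrt Y with hqdef
  have hq2 : q ^ 2 = Y := Real.sq_sqrt hY0
  have hq0 : 0 ≤ q := Real.sqrt_nonneg Y
  have hpq : |p| ≤ q := by nlinarith [abs_nonneg p, sq_abs p]
  have htp : t * p ≤ |t| * q := by
    calc t * p ≤ |t * p| := le_abs_self _
    _ = |t| * |p| := abs_mul t p
    _ ≤ |t| * q := mul_le_mul_of_nonneg_left hpq (abs_nonneg t)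
  have ha2 : |t| ^ 2 = t ^ 2 := sq_abs t
  have hDpos : (0:ℝ) < 1 + μ₁ * ρ * q ^ 2 := by positivity
  have K1 : μ₁ ≤ (μ₁ * (1 - 2 * ρ * t * p + ρ ^ 2 * t ^ 2 * Y) + ρ * t ^ 2) * (1 + μ₁ * ρ * q ^ 2) := by
    rw [← hq2, show t ^ 2 = |t| ^ 2 from (sq_abs t).symm]
    nlinarith [mul_nonneg hρ.le (sq_nonneg (μ₁ * q * (1 - ρ * |t| * q) - |t|)),
      mul_nonneg (mul_nonneg (mul_nonneg hμ1.le hρ.le) (sub_nonneg.2 htp)) hDpos.le]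
  have h4 : μ₁ / (1 + μ₁ * ρ * q ^ 2) ≤ μ₁ * (1 - 2 * ρ * t * p + ρ ^ 2 * t ^ 2 * Y) + ρ * t ^ 2 :=
    (div_le_iff₀ hDpos).2 K1
  have h5 : μ₁ / (1 + (μ₁ * μ₂ / η) * L₁ ^ 2) ≤ μ₁ / (1 + μ₁ * ρ * q ^ 2) := by
    apply div_le_div_of_nonneg_left hμ1.le hDpos
    have h6 : ρ * q ^ 2 ≤ μ₂ / η * L₁ ^ 2 := by rw [hq2]; exact hρY
    have h7 : μ₁ * (ρ * q ^ 2) ≤ μ₁ * (μ₂ / η * L₁ ^ 2) := mul_le_mul_of_nonneg_left h6 hμ1.le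
    ring_nf at h7 ⊢
    linarith
  linarith

lemma keypoly (η B d : ℝ) (hη : 0 < η) (hη1 : η < 1) (hB : 1 ≤ B) (hd1 : 1 ≤ d) :
    η * (B - d) * (1 + η * B) ^ 2 ≤
      (d * (1 + η * B) - 1) * ((B - 1) * η * (1 + η * B) + (1 + η * B) - η) := by
  nlinarith [mul_nonneg (sub_nonneg.2 hd1)
      (show (0:ℝ) ≤ (1 + η * B) * ((B - 1) * η * (1 + η * B) + (1 + η * B) - η) + η * (1 + η * B) ^ 2 by
        nlinarith [mul_nonneg (sub_nonneg.2 hB) hη.le, sq_nonneg (1 + η * B)])]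

lemma upper_scalar (μ₂ η L₁ ρ T Y σ t p : ℝ) (hμ2 : 0 < μ₂) (hη : 0 < η) (hη1 : η < 1)
    (hL : 0 < L₁) (hT : 0 < T) (hY0 : 0 ≤ Y) (hρ : 0 < ρ) (hρσ : ρ * σ = 1)
    (hσ2 : σ ^ 2 ≤ T * Y) (ht2 : t ^ 2 ≤ T)
    (hGram : (T * p - σ * t) ^ 2 ≤ (T - t ^ 2) * (T * Y - σ ^ 2))
    (hρT : ρ * T ≤ μ₂ / η) (hρY : ρ * Y ≤ μ₂ / η * L₁ ^ 2) :
    μ₂ * (1 - 2 * ρ * t * p + ρ ^ 2 * t ^ 2 * Y) + ρ * t ^ 2 ≤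
      μ₂ / η + ((μ₂ ^ 3 / η ^ 2) * L₁ ^ 2 - μ₂ / (1 + (μ₂ ^ 2 / η) * L₁ ^ 2)) := by
  set b : ℝ := μ₂ * L₁ / η with hbdef
  have hb0 : 0 < b := by positivity
  have hrhs1 : (μ₂ ^ 3 / η ^ 2) * L₁ ^ 2 = μ₂ * b ^ 2 := by rw [hbdef]; field_simp
  have hrhs2 : (μ₂ ^ 2 / η) * L₁ ^ 2 = η * b ^ 2 := by rw [hbdef]; field_simp
  rw [hrhs1, hrhs2]
  set P : ℝ := 1 + η * b ^ 2 with hPdef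
  have hP1 : (1:ℝ) ≤ P := by
    have : 0 ≤ η * b ^ 2 := by positivity
    linarith
  have hPpos : (0:ℝ) < P := by linarith
  have hρ2TY : ρ ^ 2 * (T * Y) ≤ b ^ 2 := by
    have h1 : (ρ * T) * (ρ * Y) ≤ (μ₂ / η) * (μ₂ / η * L₁ ^ 2) :=
      mul_le_mul hρT hρY (by positivity) (by positivity)
    have h2 : (μ₂ / η) * (μ₂ / η * L₁ ^ 2) = b ^ 2 := by rw [hbdef]; field_simp
    linarith [h1, h2.le, h2.ge]
  have h1b : 1 ≤ ρ ^ 2 * (T * Y) := by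
    have h1 : (ρ * σ) ^ 2 = 1 := by rw [hρσ]; norm_num
    have h2 := mul_le_mul_of_nonneg_left hσ2 (sq_nonneg ρ)
    nlinarith [h1, h2]
  have hb1 : 1 ≤ b ^ 2 := le_trans h1b hρ2TY
  set c : ℝ := ρ * Real.sqrt (T * Y - σ ^ 2) with hcdef
  have hc0 : 0 ≤ c := mul_nonneg hρ.le (Real.sqrt_nonneg _)
  have hc2' : c ^ 2 = ρ ^ 2 * (T * Y - σ ^ 2) := by
    rw [hcdef, mul_pow, Real.sq_sqrt (by linarith : (0:ℝ) ≤ T * Y - σ ^ 2)]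
  have hc2 : c ^ 2 = ρ ^ 2 * (T * Y) - 1 := by
    rw [hc2']; linear_combination (-(ρ * σ + 1)) * hρσ
  have hc2b : c ^ 2 ≤ b ^ 2 - 1 := by linarith
  set r : ℝ := Real.sqrt (T - t ^ 2) with hrdef
  have hr0 : 0 ≤ r := Real.sqrt_nonneg _
  have hr2 : r ^ 2 = T - t ^ 2 := Real.sq_sqrt (by linarith)
  set a : ℝ := |t| with hadef
  have ha0 : 0 ≤ a := abs_nonneg t
  have ha2 : a ^ 2 = t ^ 2 := sq_abs t
  set X : ℝ := ρ * (T * p) - t with hXdef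
  have hX1 : X = ρ * (T * p - σ * t) := by rw [hXdef]; linear_combination t * hρσ
  have hX2 : X ^ 2 ≤ (c * r) ^ 2 := by
    calc X ^ 2 = ρ ^ 2 * (T * p - σ * t) ^ 2 := by rw [hX1]; ring
    _ ≤ ρ ^ 2 * ((T - t ^ 2) * (T * Y - σ ^ 2)) := mul_le_mul_of_nonneg_left hGram (sq_nonneg ρ)
    _ = (c * r) ^ 2 := by rw [mul_pow, hc2', hr2]; ring
  have hcr0 : 0 ≤ c * r := mul_nonneg hc0 hr0
  have hXabs : |X| ≤ c * r := abs_le_of_sq_le_sq hX2 hcr0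
  have htX : -(a * (c * r)) ≤ t * X := by
    have h1 : |t * X| ≤ a * (c * r) := by
      rw [abs_mul, ← hadef]
      exact mul_le_mul_of_nonneg_left hXabs ha0
    linarith [neg_abs_le (t * X)]
  set K : ℝ := μ₂ * (1 / η - 1 + c ^ 2) with hKdef
  have h1η : 1 ≤ 1 / η := by
    rw [le_div_iff₀ hη]; linarith
  have hK0 : 0 ≤ K := by
    rw [hKdef]
    exact mul_nonneg hμ2.le (by linarith [sq_nonneg c])
  -- Step S1
  have e1 : T * (ρ ^ 2 * t ^ 2 * Y) = t ^ 2 * (c ^ 2 + 1) := by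
    linear_combination (-t ^ 2) * hc2
  have e2 : ρ * t ^ 2 * T ≤ μ₂ / η * t ^ 2 := by
    have := mul_le_mul_of_nonneg_right hρT (sq_nonneg t)
    linarith [this]
  have e3 : T * (2 * ρ * t * p) = 2 * (t * X) + 2 * t ^ 2 := by
    rw [hXdef]; ring
  have e4 : μ₂ * (-(2 * (t * X))) ≤ μ₂ * (2 * (a * (c * r))) := by
    apply mul_le_mul_of_nonneg_left _ hμ2.le
    linarith [htX]
  have hKt : K * t ^ 2 = μ₂ / η * t ^ 2 - μ₂ * t ^ 2 + μ₂ * (c ^ 2 * t ^ 2) := by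
    rw [hKdef]; field_simp
  have hexp : T * (μ₂ * (1 - 2 * ρ * t * p + ρ ^ 2 * t ^ 2 * Y) + ρ * t ^ 2) =
      μ₂ * T - μ₂ * (2 * (t * X) + 2 * t ^ 2) + μ₂ * (t ^ 2 * (c ^ 2 + 1)) + ρ * t ^ 2 * T := by
    linear_combination (-μ₂) * e3 + μ₂ * e1
  have hS1 : T * (μ₂ * (1 - 2 * ρ * t * p + ρ ^ 2 * t ^ 2 * Y) + ρ * t ^ 2) ≤
      μ₂ * T + K * t ^ 2 + 2 * μ₂ * (a * (c * r)) := by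
    rw [hexp]
    linarith only [e2, e4, hKt]
  -- Step S2
  set W : ℝ := Real.sqrt (K ^ 2 / 4 + μ₂ ^ 2 * c ^ 2) with hWdef
  have hW0 : 0 ≤ W := Real.sqrt_nonneg _
  have hW2 : W ^ 2 = K ^ 2 / 4 + μ₂ ^ 2 * c ^ 2 := Real.sq_sqrt (by positivity)
  have hid : (t ^ 2 - T / 2) ^ 2 + (a * r) ^ 2 = T ^ 2 / 4 := by
    rw [mul_pow, ha2, hr2]; ring
  have hS2 : K * (t ^ 2 - T / 2) + 2 * μ₂ * (a * (c * r)) ≤ W * T := by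
    have hcs : (K * (t ^ 2 - T / 2) + 2 * μ₂ * c * (a * r)) ^ 2 ≤
        (K ^ 2 + 4 * μ₂ ^ 2 * c ^ 2) * ((t ^ 2 - T / 2) ^ 2 + (a * r) ^ 2) := by
      nlinarith only [sq_nonneg (K * (a * r) - 2 * μ₂ * c * (t ^ 2 - T / 2))]
    have hsq : (K * (t ^ 2 - T / 2) + 2 * μ₂ * (a * (c * r))) ^ 2 ≤ (W * T) ^ 2 := by
      calc (K * (t ^ 2 - T / 2) + 2 * μ₂ * (a * (c * r))) ^ 2
          = (K * (t ^ 2 - T / 2) + 2 * μ₂ * c * (a * r)) ^ 2 := by ring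
        _ ≤ (K ^ 2 + 4 * μ₂ ^ 2 * c ^ 2) * ((t ^ 2 - T / 2) ^ 2 + (a * r) ^ 2) := hcs
        _ = (W * T) ^ 2 := by rw [hid]; linear_combination (-T ^ 2) * hW2
    exact le_of_sq_le_sq hsq (mul_nonneg hW0 hT.le)
  -- Step S3
  have hd1 : 1 ≤ b ^ 2 - c ^ 2 := by linarith
  have hkey := keypoly η (b ^ 2) (b ^ 2 - c ^ 2) hη hη1 hb1 hd1
  set E : ℝ := μ₂ / η + (μ₂ * b ^ 2 - μ₂ / P) - μ₂ - K / 2 with hEdef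
  have hEeq : E = K / 2 + μ₂ * (b ^ 2 - c ^ 2) - μ₂ / P := by
    rw [hEdef, hKdef]; field_simp; ring
  have hE0 : 0 ≤ E := by
    have h1 : μ₂ / P ≤ μ₂ := div_le_self hμ2.le hP1
    have h2 : μ₂ * 1 ≤ μ₂ * (b ^ 2 - c ^ 2) := mul_le_mul_of_nonneg_left hd1 hμ2.le
    rw [hEeq]; linarith
  have hEW2 : W ^ 2 ≤ E ^ 2 := by
    have h1 : (μ₂ * (b ^ 2 - c ^ 2) - μ₂ / P) * P = μ₂ * ((b ^ 2 - c ^ 2) * P - 1) := by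
      field_simp
    have h2 : (μ₂ * (b ^ 2 - c ^ 2) - μ₂ / P + K) * (P * η) =
        μ₂ * ((b ^ 2 - 1) * η * P + P - η) := by
      rw [hKdef]; field_simp; ring
    have h3 : ((μ₂ * (b ^ 2 - c ^ 2) - μ₂ / P) * (μ₂ * (b ^ 2 - c ^ 2) - μ₂ / P + K)) * (P ^ 2 * η)
        = μ₂ ^ 2 * (((b ^ 2 - c ^ 2) * P - 1) * ((b ^ 2 - 1) * η * P + P - η)) := by
      calc ((μ₂ * (b ^ 2 - c ^ 2) - μ₂ / P) * (μ₂ * (b ^ 2 - c ^ 2) - μ₂ / P + K)) * (P ^ 2 * η)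
          = ((μ₂ * (b ^ 2 - c ^ 2) - μ₂ / P) * P) *
            ((μ₂ * (b ^ 2 - c ^ 2) - μ₂ / P + K) * (P * η)) := by ring
        _ = (μ₂ * ((b ^ 2 - c ^ 2) * P - 1)) * (μ₂ * ((b ^ 2 - 1) * η * P + P - η)) := by
            rw [h1, h2]
        _ = μ₂ ^ 2 * (((b ^ 2 - c ^ 2) * P - 1) * ((b ^ 2 - 1) * η * P + P - η)) := by ring
    have h5 : μ₂ ^ 2 * (η * (b ^ 2 - (b ^ 2 - c ^ 2)) * P ^ 2) ≤
        μ₂ ^ 2 * (((b ^ 2 - c ^ 2) * P - 1) * ((b ^ 2 - 1) * η * P + P - η)) := by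
      rw [hPdef]
      exact mul_le_mul_of_nonneg_left hkey (sq_nonneg μ₂)
    have h6 : (μ₂ ^ 2 * c ^ 2) * (P ^ 2 * η) ≤
        ((μ₂ * (b ^ 2 - c ^ 2) - μ₂ / P) * (μ₂ * (b ^ 2 - c ^ 2) - μ₂ / P + K)) * (P ^ 2 * η) := by
      rw [h3]
      calc (μ₂ ^ 2 * c ^ 2) * (P ^ 2 * η) = μ₂ ^ 2 * (η * (b ^ 2 - (b ^ 2 - c ^ 2)) * P ^ 2) := by
            ring
        _ ≤ _ := h5
    have hP2η : (0:ℝ) < P ^ 2 * η := by positivity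
    have h7 := le_of_mul_le_mul_right h6 hP2η
    have hsplit : E ^ 2 - W ^ 2 =
        (μ₂ * (b ^ 2 - c ^ 2) - μ₂ / P) * (μ₂ * (b ^ 2 - c ^ 2) - μ₂ / P + K) - μ₂ ^ 2 * c ^ 2 := by
      rw [hEeq, hW2]; ring
    have h8 : 0 ≤ E ^ 2 - W ^ 2 := by rw [hsplit]; linarith only [h7]
    linarith only [h8]
  have hWE : W ≤ E := le_of_sq_le_sq hEW2 hE0
  -- Final assembly
  have hfin : T * (μ₂ * (1 - 2 * ρ * t * p + ρ ^ 2 * t ^ 2 * Y) + ρ * t ^ 2) ≤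
      T * (μ₂ / η + (μ₂ * b ^ 2 - μ₂ / P)) := by
    calc T * (μ₂ * (1 - 2 * ρ * t * p + ρ ^ 2 * t ^ 2 * Y) + ρ * t ^ 2)
        ≤ μ₂ * T + K * t ^ 2 + 2 * μ₂ * (a * (c * r)) := hS1
      _ = μ₂ * T + K * (T / 2) + (K * (t ^ 2 - T / 2) + 2 * μ₂ * (a * (c * r))) := by ring
      _ ≤ μ₂ * T + K * (T / 2) + W * T := by linarith only [hS2]
      _ = T * (μ₂ + K / 2 + W) := by ring
      _ ≤ T * (μ₂ + K / 2 + E) := by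
          exact mul_le_mul_of_nonneg_left (add_le_add_right hWE _) hT.le
      _ = T * (μ₂ / η + (μ₂ * b ^ 2 - μ₂ / P)) := by rw [hEdef]; ring
  exact le_of_mul_le_mul_left hfin hT

lemma vecMulVec_transpose' {n : ℕ} (u v : Fin n → ℝ) :
    (vecMulVec u v)ᵀ = vecMulVec v u := by
  ext i j; simp [vecMulVec_apply, mul_comm]

lemma vecMulVec_mulVec' {n : ℕ} (u v x : Fin n → ℝ) :
    vecMulVec u v *ᵥ x = (v ⬝ᵥ x) • u := by
  ext i
  simp only [mulVec, vecMulVec_apply, dotProduct, Pi.smul_apply, smul_eq_mul]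
  rw [Finset.sum_mul]
  exact Finset.sum_congr rfl fun j _ => by ring

theorem stmt_16 {n : ℕ} (H0 H : Matrix (Fin n) (Fin n) ℝ)
    (hH0 : H0.PosDef)
    (μ₁ μ₂ η Lg L₁ ρh : ℝ)
    (hμ1 : 0 < μ₁) (hμ12 : μ₁ ≤ μ₂)
    (heig : ∀ i, μ₁ ≤ hH0.1.eigenvalues i ∧ hH0.1.eigenvalues i ≤ μ₂)
    (hη0 : 0 < η) (hη1 : η < 1) (hLg : 0 < Lg)
    (hL1 : L₁ = Lg + 1 / μ₁)
    (s yhat : Fin n → ℝ) (hs : s ≠ 0)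
    (hsy : s ⬝ᵥ yhat ≥ (η / μ₂) * (s ⬝ᵥ s))
    (hyn : Real.sqrt (yhat ⬝ᵥ yhat) ≤ L₁ * Real.sqrt (s ⬝ᵥ s))
    (hρ : ρh = 1 / (s ⬝ᵥ yhat))
    (Vh : Matrix (Fin n) (Fin n) ℝ)
    (hV : Vh = 1 - ρh • vecMulVec s yhat)
    (hHdef : H = Vh * H0 * Vhᵀ + ρh • vecMulVec s s)
    (hHh : H.IsHermitian) :
    0 < min (1 / L₁) (μ₁ / (1 + (μ₁ * μ₂ / η) * L₁ ^ 2)) ∧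
      (∀ i, min (1 / L₁) (μ₁ / (1 + (μ₁ * μ₂ / η) * L₁ ^ 2)) ≤ hHh.eigenvalues i) ∧
      (∀ i, hHh.eigenvalues i ≤
        μ₂ / η + max 0 ((μ₂ ^ 3 / η ^ 2) * L₁ ^ 2 - μ₂ / (1 + (μ₂ ^ 2 / η) * L₁ ^ 2))) := by
  have hμ2 : 0 < μ₂ := lt_of_lt_of_le hμ1 hμ12
  have hL1p : 0 < L₁ := by rw [hL1]; positivity
  have hT : 0 < s ⬝ᵥ s := dot_self_pos s hs
  have hY0 : 0 ≤ yhat ⬝ᵥ yhat := dot_self_nonneg yhat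
  have hσpos : 0 < s ⬝ᵥ yhat := lt_of_lt_of_le (by positivity) hsy
  have hρpos : 0 < ρh := by rw [hρ]; positivity
  have hρσ : ρh * (s ⬝ᵥ yhat) = 1 := by rw [hρ]; field_simp
  have hYT : yhat ⬝ᵥ yhat ≤ L₁ ^ 2 * (s ⬝ᵥ s) := by
    have h := mul_self_le_mul_self (Real.sqrt_nonneg (yhat ⬝ᵥ yhat)) hyn
    rw [Real.mul_self_sqrt hY0] at h
    have h3 : (L₁ * Real.sqrt (s ⬝ᵥ s)) * (L₁ * Real.sqrt (s ⬝ᵥ s)) = L₁ ^ 2 * (s ⬝ᵥ s) := by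
      rw [show (L₁ * Real.sqrt (s ⬝ᵥ s)) * (L₁ * Real.sqrt (s ⬝ᵥ s)) =
        L₁ ^ 2 * (Real.sqrt (s ⬝ᵥ s) * Real.sqrt (s ⬝ᵥ s)) from by ring,
        Real.mul_self_sqrt hT.le]
    linarith
  have hρT : ρh * (s ⬝ᵥ s) ≤ μ₂ / η := by
    have h1 : μ₂ * ((η / μ₂) * (s ⬝ᵥ s)) ≤ μ₂ * (s ⬝ᵥ yhat) :=
      mul_le_mul_of_nonneg_left hsy hμ2.le
    have h2 : μ₂ * ((η / μ₂) * (s ⬝ᵥ s)) = η * (s ⬝ᵥ s) := by field_simp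
    rw [hρ, one_div, inv_mul_eq_div, div_le_div_iff₀ hσpos hη0]
    linarith
  have hρY : ρh * (yhat ⬝ᵥ yhat) ≤ μ₂ / η * L₁ ^ 2 := by
    have h1 : ρh * (yhat ⬝ᵥ yhat) ≤ ρh * (L₁ ^ 2 * (s ⬝ᵥ s)) :=
      mul_le_mul_of_nonneg_left hYT hρpos.le
    have h3 : L₁ ^ 2 * (ρh * (s ⬝ᵥ s)) ≤ L₁ ^ 2 * (μ₂ / η) :=
      mul_le_mul_of_nonneg_left hρT (by positivity)
    nlinarith only [h1, h3]
  have hσ2TY : (s ⬝ᵥ yhat) ^ 2 ≤ (s ⬝ᵥ s) * (yhat ⬝ᵥ yhat) := dotCS s yhat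
  -- transpose of Vh
  have hVT : Vhᵀ = 1 - ρh • vecMulVec yhat s := by
    rw [hV, transpose_sub, transpose_one, transpose_smul, vecMulVec_transpose']
  -- decomposition of the quadratic form, for any x
  have hu : ∀ x : Fin n → ℝ, Vhᵀ *ᵥ x = x - (ρh * (s ⬝ᵥ x)) • yhat := by
    intro x
    rw [hVT, sub_mulVec, one_mulVec, smul_mulVec, vecMulVec_mulVec', smul_smul]
  have hQdecomp : ∀ x : Fin n → ℝ, x ⬝ᵥ (H *ᵥ x) =
      (Vhᵀ *ᵥ x) ⬝ᵥ (H0 *ᵥ (Vhᵀ *ᵥ x)) + ρh * (s ⬝ᵥ x) ^ 2 := by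
    intro x
    rw [hHdef, add_mulVec, dotProduct_add]
    congr 1
    · rw [← mulVec_mulVec, ← mulVec_mulVec, dotProduct_mulVec, ← mulVec_transpose]
    · rw [smul_mulVec, vecMulVec_mulVec', dotProduct_smul, smul_eq_mul,
        dotProduct_smul, smul_eq_mul, dotProduct_comm x s]
      ring
  constructor
  · exact lt_min (by positivity) (by positivity)
  constructor
  · -- lower bound
    intro i
    obtain ⟨x, hx1, hxQ⟩ := eig_rayleigh hHh i
    have hun : (Vhᵀ *ᵥ x) ⬝ᵥ (Vhᵀ *ᵥ x) =
        1 - 2 * ρh * (s ⬝ᵥ x) * (x ⬝ᵥ yhat) + ρh ^ 2 * (s ⬝ᵥ x) ^ 2 * (yhat ⬝ᵥ yhat) := by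
      rw [hu x]
      simp only [sub_dotProduct, dotProduct_sub, smul_dotProduct, dotProduct_smul,
        smul_eq_mul, hx1, dotProduct_comm yhat x]
      ring
    have hp2 : (x ⬝ᵥ yhat) ^ 2 ≤ yhat ⬝ᵥ yhat := by
      have := dotCS x yhat
      rw [hx1, one_mul] at this
      exact this
    have hq := (quadform_bounds hH0.1 μ₁ μ₂ heig (Vhᵀ *ᵥ x)).1
    have hls := lower_scalar μ₁ μ₂ η L₁ ρh (yhat ⬝ᵥ yhat) (s ⬝ᵥ x) (x ⬝ᵥ yhat)
      hμ1 hμ2 hη0 hL1p hρpos hY0 hp2 hρY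
    calc min (1 / L₁) (μ₁ / (1 + (μ₁ * μ₂ / η) * L₁ ^ 2))
        ≤ μ₁ / (1 + (μ₁ * μ₂ / η) * L₁ ^ 2) := min_le_right _ _
      _ ≤ μ₁ * (1 - 2 * ρh * (s ⬝ᵥ x) * (x ⬝ᵥ yhat)
            + ρh ^ 2 * (s ⬝ᵥ x) ^ 2 * (yhat ⬝ᵥ yhat)) + ρh * (s ⬝ᵥ x) ^ 2 := hls
      _ = μ₁ * ((Vhᵀ *ᵥ x) ⬝ᵥ (Vhᵀ *ᵥ x)) + ρh * (s ⬝ᵥ x) ^ 2 := by rw [hun]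
      _ ≤ (Vhᵀ *ᵥ x) ⬝ᵥ (H0 *ᵥ (Vhᵀ *ᵥ x)) + ρh * (s ⬝ᵥ x) ^ 2 := by linarith only [hq]
      _ = x ⬝ᵥ (H *ᵥ x) := (hQdecomp x).symm
      _ = hHh.eigenvalues i := hxQ
  · -- upper bound
    intro i
    obtain ⟨x, hx1, hxQ⟩ := eig_rayleigh hHh i
    have hun : (Vhᵀ *ᵥ x) ⬝ᵥ (Vhᵀ *ᵥ x) =
        1 - 2 * ρh * (s ⬝ᵥ x) * (x ⬝ᵥ yhat) + ρh ^ 2 * (s ⬝ᵥ x) ^ 2 * (yhat ⬝ᵥ yhat) := by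
      rw [hu x]
      simp only [sub_dotProduct, dotProduct_sub, smul_dotProduct, dotProduct_smul,
        smul_eq_mul, hx1, dotProduct_comm yhat x]
      ring
    have ht2 : (s ⬝ᵥ x) ^ 2 ≤ s ⬝ᵥ s := by
      have := dotCS s x
      rw [hx1, mul_one] at this
      exact this
    -- Gram / Cauchy-Schwarz on projected vectors
    have hGram : ((s ⬝ᵥ s) * (x ⬝ᵥ yhat) - (s ⬝ᵥ yhat) * (s ⬝ᵥ x)) ^ 2 ≤
        ((s ⬝ᵥ s) - (s ⬝ᵥ x) ^ 2) * ((s ⬝ᵥ s) * (yhat ⬝ᵥ yhat) - (s ⬝ᵥ yhat) ^ 2) := by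
      have hG0 := dotCS ((s ⬝ᵥ s) • x - (s ⬝ᵥ x) • s) ((s ⬝ᵥ s) • yhat - (s ⬝ᵥ yhat) • s)
      have hzz : ((s ⬝ᵥ s) • x - (s ⬝ᵥ x) • s) ⬝ᵥ ((s ⬝ᵥ s) • x - (s ⬝ᵥ x) • s) =
          (s ⬝ᵥ s) * ((s ⬝ᵥ s) - (s ⬝ᵥ x) ^ 2) := by
        simp only [sub_dotProduct, dotProduct_sub, smul_dotProduct, dotProduct_smul,
          smul_eq_mul, hx1, dotProduct_comm x s]
        ring
      have hww : ((s ⬝ᵥ s) • yhat - (s ⬝ᵥ yhat) • s) ⬝ᵥ ((s ⬝ᵥ s) • yhat - (s ⬝ᵥ yhat) • s) =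
          (s ⬝ᵥ s) * ((s ⬝ᵥ s) * (yhat ⬝ᵥ yhat) - (s ⬝ᵥ yhat) ^ 2) := by
        simp only [sub_dotProduct, dotProduct_sub, smul_dotProduct, dotProduct_smul,
          smul_eq_mul, dotProduct_comm yhat s]
        ring
      have hzw : ((s ⬝ᵥ s) • x - (s ⬝ᵥ x) • s) ⬝ᵥ ((s ⬝ᵥ s) • yhat - (s ⬝ᵥ yhat) • s) =
          (s ⬝ᵥ s) * ((s ⬝ᵥ s) * (x ⬝ᵥ yhat) - (s ⬝ᵥ yhat) * (s ⬝ᵥ x)) := by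
        simp only [sub_dotProduct, dotProduct_sub, smul_dotProduct, dotProduct_smul,
          smul_eq_mul, dotProduct_comm x s, dotProduct_comm yhat s]
        ring
      rw [hzz, hww, hzw] at hG0
      refine le_of_mul_le_mul_right ?_ (pow_pos hT 2)
      calc ((s ⬝ᵥ s) * (x ⬝ᵥ yhat) - (s ⬝ᵥ yhat) * (s ⬝ᵥ x)) ^ 2 * (s ⬝ᵥ s) ^ 2
          = ((s ⬝ᵥ s) * ((s ⬝ᵥ s) * (x ⬝ᵥ yhat) - (s ⬝ᵥ yhat) * (s ⬝ᵥ x))) ^ 2 := by ring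
        _ ≤ ((s ⬝ᵥ s) * ((s ⬝ᵥ s) - (s ⬝ᵥ x) ^ 2)) *
            ((s ⬝ᵥ s) * ((s ⬝ᵥ s) * (yhat ⬝ᵥ yhat) - (s ⬝ᵥ yhat) ^ 2)) := hG0
        _ = ((s ⬝ᵥ s) - (s ⬝ᵥ x) ^ 2) * ((s ⬝ᵥ s) * (yhat ⬝ᵥ yhat) - (s ⬝ᵥ yhat) ^ 2)
            * (s ⬝ᵥ s) ^ 2 := by ring
    have hq := (quadform_bounds hH0.1 μ₁ μ₂ heig (Vhᵀ *ᵥ x)).2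
    have hus := upper_scalar μ₂ η L₁ ρh (s ⬝ᵥ s) (yhat ⬝ᵥ yhat) (s ⬝ᵥ yhat) (s ⬝ᵥ x) (x ⬝ᵥ yhat)
      hμ2 hη0 hη1 hL1p hT hY0 hρpos hρσ hσ2TY ht2 hGram hρT hρY
    calc hHh.eigenvalues i = x ⬝ᵥ (H *ᵥ x) := hxQ.symm
      _ = (Vhᵀ *ᵥ x) ⬝ᵥ (H0 *ᵥ (Vhᵀ *ᵥ x)) + ρh * (s ⬝ᵥ x) ^ 2 := hQdecomp x
      _ ≤ μ₂ * ((Vhᵀ *ᵥ x) ⬝ᵥ (Vhᵀ *ᵥ x)) + ρh * (s ⬝ᵥ x) ^ 2 := by linarith only [hq]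
      _ = μ₂ * (1 - 2 * ρh * (s ⬝ᵥ x) * (x ⬝ᵥ yhat)
            + ρh ^ 2 * (s ⬝ᵥ x) ^ 2 * (yhat ⬝ᵥ yhat)) + ρh * (s ⬝ᵥ x) ^ 2 := by rw [hun]
      _ ≤ μ₂ / η + ((μ₂ ^ 3 / η ^ 2) * L₁ ^ 2 - μ₂ / (1 + (μ₂ ^ 2 / η) * L₁ ^ 2)) := hus
      _ ≤ μ₂ / η + max 0 ((μ₂ ^ 3 / η ^ 2) * L₁ ^ 2 - μ₂ / (1 + (μ₂ ^ 2 / η) * L₁ ^ 2)) :=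
          add_le_add_right (le_max_right _ _) _
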